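/- Let R ∈ ℕ^m, S ∈ ℕ^n, and k a positive integer. If M : Fin m × Fin n → ℕ has row sum vector kR and column sum vector kS, then M = Q₁ + Q₂ + ⋯ + Q_k where each Q_t : Fin m × Fin n → ℕ has row sum vector R and column sum vector S. -/

import Mathlib

open Finset

lemma sum_perm_decomp {α β : Type*} [Fintype α] [Fintype β] [DecidableEq α] [DecidableEq β] :
    ∀ (s : ℕ) (M : α → β → ℕ), (∀ a, ∑ b, M a b = s) → (∀ b, ∑ a, M a b = s) →
    ∃ P : Fin s → α → β → ℕ,
      (∀ t a, ∑ b, P t a b = 1) ∧ (∀ t b, ∑ a, P t a b = 1) ∧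
      (∀ a b, M a b = ∑ t, P t a b) := by
  intro s
  induction s with
  | zero =>
    intro M hr _
    refine ⟨Fin.elim0, fun t => t.elim0, fun t => t.elim0, fun a b => ?_⟩
    have h := hr a
    have : M a b = 0 := by
      by_contra h0
      have : 0 < ∑ b, M a b := Finset.sum_pos' (fun _ _ => Nat.zero_le _)
        ⟨b, mem_univ b, Nat.pos_of_ne_zero h0⟩
      omega
    simp [this]
  | succ s ih =>
    intro M hr hc
    -- Hall's condition
    have hall : ∀ A : Finset α, #A ≤ #(A.biUnion (fun a => univ.filter (fun b => 0 < M a b))) := by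
      intro A
      have key : (s+1) * #A ≤ (s+1) * #(A.biUnion (fun a => univ.filter (fun b => 0 < M a b))) := by
        calc (s+1) * #A = ∑ a ∈ A, ∑ b, M a b := by
              rw [Finset.sum_congr rfl (fun a _ => hr a)]; simp [mul_comm]
          _ = ∑ b, ∑ a ∈ A, M a b := Finset.sum_comm
          _ = ∑ b ∈ A.biUnion (fun a => univ.filter (fun b => 0 < M a b)), ∑ a ∈ A, M a b := by
              refine (Finset.sum_subset (Finset.subset_univ _) ?_).symm
              intro b _ hb
              refine Finset.sum_eq_zero (fun a ha => ?_)
              by_contra h0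
              exact hb (Finset.mem_biUnion.mpr ⟨a, ha, Finset.mem_filter.mpr ⟨mem_univ _, Nat.pos_of_ne_zero h0⟩⟩)
          _ ≤ ∑ _b ∈ A.biUnion (fun a => univ.filter (fun b => 0 < M a b)), (s+1) := by
              refine Finset.sum_le_sum (fun b _ => ?_)
              rw [← hc b]
              exact Finset.sum_le_sum_of_subset (Finset.subset_univ _)
          _ = (s+1) * #(A.biUnion (fun a => univ.filter (fun b => 0 < M a b))) := by
              simp [mul_comm]
      exact Nat.le_of_mul_le_mul_left key (Nat.succ_pos s)
    obtain ⟨f, hfinj, hf⟩ := (Finset.all_card_le_biUnion_card_iff_exists_injective _).mp hall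
    have hfpos : ∀ a, 0 < M a (f a) := fun a => (Finset.mem_filter.mp (hf a)).2
    have hcard : Fintype.card α = Fintype.card β := by
      have h1 : (s+1) * Fintype.card α = (s+1) * Fintype.card β := by
        calc (s+1) * Fintype.card α = ∑ a : α, ∑ b, M a b := by
              rw [Finset.sum_congr rfl (fun a _ => hr a)]; simp [mul_comm]
          _ = ∑ b : β, ∑ a, M a b := Finset.sum_comm
          _ = (s+1) * Fintype.card β := by
              rw [Finset.sum_congr rfl (fun b _ => hc b)]; simp [mul_comm]
      exact Nat.eq_of_mul_eq_mul_left (Nat.succ_pos s) h1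
    have hfbij : Function.Bijective f :=
      (Fintype.bijective_iff_injective_and_card f).mpr ⟨hfinj, hcard⟩
    set P0 : α → β → ℕ := fun a b => if f a = b then 1 else 0 with hP0
    have hP0le : ∀ a b, P0 a b ≤ M a b := by
      intro a b
      by_cases h : f a = b
      · simp [hP0, h]; rw [← h]; exact hfpos a
      · simp [hP0, h]
    have hP0row : ∀ a, ∑ b, P0 a b = 1 := by
      intro a; simp [hP0]
    have hP0col : ∀ b, ∑ a, P0 a b = 1 := by
      intro b
      obtain ⟨a0, ha0⟩ := hfbij.surjective b
      rw [Finset.sum_eq_single a0]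
      · simp [hP0, ha0]
      · intro a _ hne
        have : f a ≠ b := fun h => hne (hfinj (h.trans ha0.symm))
        simp [hP0, this]
      · intro h; exact absurd (mem_univ a0) h
    set M' : α → β → ℕ := fun a b => M a b - P0 a b with hM'
    have hsplit : ∀ a b, M a b = P0 a b + M' a b := by
      intro a b; have := hP0le a b; simp [hM']; omega
    have hr' : ∀ a, ∑ b, M' a b = s := by
      intro a
      have : ∑ b, M a b = ∑ b, (P0 a b + M' a b) := Finset.sum_congr rfl (fun b _ => hsplit a b)
      rw [Finset.sum_add_distrib, hP0row] at this
      have := hr a; omega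
    have hc' : ∀ b, ∑ a, M' a b = s := by
      intro b
      have : ∑ a, M a b = ∑ a, (P0 a b + M' a b) := Finset.sum_congr rfl (fun a _ => hsplit a b)
      rw [Finset.sum_add_distrib, hP0col] at this
      have := hc b; omega
    obtain ⟨P', hPr', hPc', hPs'⟩ := ih M' hr' hc'
    refine ⟨Fin.cases P0 P', ?_, ?_, ?_⟩
    · intro t a
      induction t using Fin.cases with
      | zero => simpa using hP0row a
      | succ t => simpa using hPr' t a
    · intro t b
      induction t using Fin.cases with
      | zero => simpa using hP0col b
      | succ t => simpa using hPc' t b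
    · intro a b
      rw [Fin.sum_univ_succ]
      simp only [Fin.cases_zero, Fin.cases_succ]
      rw [hsplit a b, hPs' a b]

lemma chunk_count (f : ℕ → ℕ) (p : ℕ → Prop) [DecidablePred p] :
    ∀ N : ℕ, ∑ j ∈ range N, #((range (f j)).filter (fun c => p ((∑ j' ∈ range j, f j') + c)))
      = #((range (∑ j ∈ range N, f j)).filter p) := by
  intro N
  induction N with
  | zero => simp
  | succ N ih =>
    rw [Finset.sum_range_succ, Finset.sum_range_succ, Finset.range_add, filter_union,
      Finset.card_union_of_disjoint, ih]
    · congr 1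
      rw [Finset.filter_map, Finset.card_map]
      rfl
    · exact Finset.disjoint_filter_filter (Finset.disjoint_left.mpr (by
        intro x hx hx2
        simp only [mem_range] at hx
        simp only [Finset.mem_map, mem_range] at hx2
        obtain ⟨c, _, hc⟩ := hx2
        simp only [addLeftEmbedding_apply] at hc
        omega))

lemma fiber_count (s : Finset ℕ) (g : ℕ → ℕ) (N : ℕ) (h : ∀ c ∈ s, g c < N) :
    ∑ b : Fin N, #(s.filter (fun c => g c = ↑b)) = #s := by
  rw [Fin.sum_univ_eq_sum_range (fun v => #(s.filter (fun c => g c = v)))]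
  exact (Finset.card_eq_sum_card_fiberwise (fun c hc => mem_range.mpr (h c hc))).symm

lemma div_filter_count (k a r : ℕ) (hk : 0 < k) (ha : a < r) :
    #((range (k * r)).filter (fun x => x / k = a)) = k := by
  have e1 : (a + 1) * k = a * k + k := by ring
  have e2 : k * a = a * k := by ring
  have e3 : k * r = r * k := by ring
  have h3 : (a + 1) * k ≤ r * k := Nat.mul_le_mul_right k ha
  have key : (range (k * r)).filter (fun x => x / k = a) = Finset.Ico (k * a) (k * a + k) := by
    ext x
    have h1 : a ≤ x / k ↔ a * k ≤ x := Nat.le_div_iff_mul_le hk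
    have h2 : x / k < a + 1 ↔ x < (a + 1) * k := Nat.div_lt_iff_lt_mul hk
    simp only [mem_filter, mem_range, Finset.mem_Ico]
    constructor
    · rintro ⟨hxr, hxa⟩
      have ha1 : a * k ≤ x := h1.mp (by omega)
      have ha2 : x < (a + 1) * k := h2.mp (by omega)
      omega
    · rintro ⟨hlo, hhi⟩
      have ha1 : a ≤ x / k := h1.mpr (by omega)
      have ha2 : x / k < a + 1 := h2.mpr (by omega)
      omega
  rw [key]
  simp

theorem stmt_8 (m n k : ℕ) (hk : 0 < k) (R : Fin m → ℕ) (S : Fin n → ℕ)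
    (M : Fin m × Fin n → ℕ)
    (hrow : ∀ i, ∑ j : Fin n, M (i, j) = k * R i)
    (hcol : ∀ j, ∑ i : Fin m, M (i, j) = k * S j) :
    ∃ Q : Fin k → (Fin m × Fin n → ℕ),
      (∀ t, ∀ i, ∑ j : Fin n, Q t (i, j) = R i) ∧
      (∀ t, ∀ j, ∑ i : Fin m, Q t (i, j) = S j) ∧
      (∀ p, M p = ∑ t : Fin k, Q t p) := by
  classical
  -- extended matrix on ℕ × ℕ
  set A : ℕ → ℕ → ℕ := fun i j => if h : i < m ∧ j < n then M (⟨i, h.1⟩, ⟨j, h.2⟩) else 0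
    with hA
  have hAeq : ∀ (i : Fin m) (j : Fin n), A ↑i ↑j = M (i, j) := by
    intro i j
    simp only [hA, i.2, j.2, and_self, dif_pos, Fin.eta]
  have hArow : ∀ (i : Fin m), ∑ j ∈ range n, A ↑i j = k * R i := by
    intro i
    rw [← Fin.sum_univ_eq_sum_range (fun j => A ↑i j) n, ← hrow i]
    exact Finset.sum_congr rfl (fun j _ => hAeq i j)
  have hAcol : ∀ (j : Fin n), ∑ i ∈ range m, A i ↑j = k * S j := by
    intro j
    rw [← Fin.sum_univ_eq_sum_range (fun i => A i ↑j) m, ← hcol j]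
    exact Finset.sum_congr rfl (fun i _ => hAeq i j)
  -- prefix bound facts
  have hprefR : ∀ (i : Fin m) (j : Fin n) (c : ℕ), c < A ↑i ↑j →
      (∑ j' ∈ range ↑j, A ↑i j') + c < k * R i := by
    intro i j c hc
    have h1 : (∑ j' ∈ range ↑j, A ↑i j') + A ↑i ↑j = ∑ j' ∈ range (↑j + 1), A ↑i j' :=
      (Finset.sum_range_succ _ _).symm
    have h2 : ∑ j' ∈ range (↑j + 1), A ↑i j' ≤ ∑ j' ∈ range n, A ↑i j' :=
      Finset.sum_le_sum_of_subset (Finset.range_subset_range.mpr j.2)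
    rw [hArow i] at h2
    omega
  have hprefC : ∀ (i : Fin m) (j : Fin n) (c : ℕ), c < A ↑i ↑j →
      (∑ i' ∈ range ↑i, A i' ↑j) + c < k * S j := by
    intro i j c hc
    have h1 : (∑ i' ∈ range ↑i, A i' ↑j) + A ↑i ↑j = ∑ i' ∈ range (↑i + 1), A i' ↑j :=
      (Finset.sum_range_succ _ _).symm
    have h2 : ∑ i' ∈ range (↑i + 1), A i' ↑j ≤ ∑ i' ∈ range m, A i' ↑j :=
      Finset.sum_le_sum_of_subset (Finset.range_subset_range.mpr i.2)
    rw [hAcol j] at h2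
    omega
  -- the split matrix
  set M' : (Σ i : Fin m, Fin (R i)) → (Σ j : Fin n, Fin (S j)) → ℕ :=
    fun x y => #((range (A ↑x.1 ↑y.1)).filter
      (fun c => ((∑ j' ∈ range ↑y.1, A ↑x.1 j') + c) / k = ↑x.2 ∧
                ((∑ i' ∈ range ↑x.1, A i' ↑y.1) + c) / k = ↑y.2)) with hM'
  -- row sums of M' are k
  have hM'row : ∀ x, ∑ y, M' x y = k := by
    rintro ⟨i, a⟩
    rw [← Finset.univ_sigma_univ, Finset.sum_sigma]
    have step1 : ∀ j : Fin n, ∑ b : Fin (S j), M' ⟨i, a⟩ ⟨j, b⟩ =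
        #((range (A ↑i ↑j)).filter (fun c => ((∑ j' ∈ range ↑j, A ↑i j') + c) / k = ↑a)) := by
      intro j
      have : ∀ b : Fin (S j), M' ⟨i, a⟩ ⟨j, b⟩ =
          #(((range (A ↑i ↑j)).filter (fun c => ((∑ j' ∈ range ↑j, A ↑i j') + c) / k = ↑a)).filter
            (fun c => ((∑ i' ∈ range ↑i, A i' ↑j) + c) / k = ↑b)) := by
        intro b
        rw [hM', Finset.filter_filter]
      rw [Finset.sum_congr rfl (fun b _ => this b)]
      apply fiber_count
      intro c hc
      rw [Finset.mem_filter, Finset.mem_range] at hc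
      rw [Nat.div_lt_iff_lt_mul hk, mul_comm]
      exact hprefC i j c hc.1
    rw [Finset.sum_congr rfl (fun j _ => step1 j)]
    rw [Fin.sum_univ_eq_sum_range
      (fun j => #((range (A ↑i j)).filter (fun c => ((∑ j' ∈ range j, A ↑i j') + c) / k = ↑a))) n]
    rw [chunk_count (A ↑i) (fun x => x / k = ↑a) n, hArow i]
    exact div_filter_count k ↑a (R i) hk a.2
  -- column sums of M' are k
  have hM'col : ∀ y, ∑ x, M' x y = k := by
    rintro ⟨j, b⟩
    rw [← Finset.univ_sigma_univ, Finset.sum_sigma]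
    have step1 : ∀ i : Fin m, ∑ a : Fin (R i), M' ⟨i, a⟩ ⟨j, b⟩ =
        #((range (A ↑i ↑j)).filter (fun c => ((∑ i' ∈ range ↑i, A i' ↑j) + c) / k = ↑b)) := by
      intro i
      have key : ∀ a : Fin (R i), M' ⟨i, a⟩ ⟨j, b⟩ =
          #(((range (A ↑i ↑j)).filter (fun c => ((∑ i' ∈ range ↑i, A i' ↑j) + c) / k = ↑b)).filter
            (fun c => ((∑ j' ∈ range ↑j, A ↑i j') + c) / k = ↑a)) := by
        intro a
        rw [hM', Finset.filter_filter]
        simp only [and_comm]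
      rw [Finset.sum_congr rfl (fun a _ => key a)]
      apply fiber_count
      intro c hc
      rw [Finset.mem_filter, Finset.mem_range] at hc
      rw [Nat.div_lt_iff_lt_mul hk, mul_comm]
      exact hprefR i j c hc.1
    rw [Finset.sum_congr rfl (fun i _ => step1 i)]
    rw [Fin.sum_univ_eq_sum_range
      (fun i => #((range (A i ↑j)).filter (fun c => ((∑ i' ∈ range i, A i' ↑j) + c) / k = ↑b))) m]
    rw [chunk_count (fun i => A i ↑j) (fun x => x / k = ↑b) m, hAcol j]
    exact div_filter_count k ↑b (S j) hk b.2
  -- entry decomposition of M'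
  have hM'entry : ∀ (i : Fin m) (j : Fin n),
      ∑ a : Fin (R i), ∑ b : Fin (S j), M' ⟨i, a⟩ ⟨j, b⟩ = M (i, j) := by
    intro i j
    have step1 : ∀ a : Fin (R i), ∑ b : Fin (S j), M' ⟨i, a⟩ ⟨j, b⟩ =
        #((range (A ↑i ↑j)).filter (fun c => ((∑ j' ∈ range ↑j, A ↑i j') + c) / k = ↑a)) := by
      intro a
      have key : ∀ b : Fin (S j), M' ⟨i, a⟩ ⟨j, b⟩ =
          #(((range (A ↑i ↑j)).filter (fun c => ((∑ j' ∈ range ↑j, A ↑i j') + c) / k = ↑a)).filter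
            (fun c => ((∑ i' ∈ range ↑i, A i' ↑j) + c) / k = ↑b)) := by
        intro b
        rw [hM', Finset.filter_filter]
      rw [Finset.sum_congr rfl (fun b _ => key b)]
      apply fiber_count
      intro c hc
      rw [Finset.mem_filter, Finset.mem_range] at hc
      rw [Nat.div_lt_iff_lt_mul hk, mul_comm]
      exact hprefC i j c hc.1
    rw [Finset.sum_congr rfl (fun a _ => step1 a)]
    have fib := fiber_count (range (A ↑i ↑j))
      (fun c => ((∑ j' ∈ range ↑j, A ↑i j') + c) / k) (R i)
      (by
        intro c hc
        rw [Finset.mem_range] at hc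
        rw [Nat.div_lt_iff_lt_mul hk, mul_comm]
        exact hprefR i j c hc)
    exact fib.trans (by rw [Finset.card_range]; exact hAeq i j)
  -- apply the permutation decomposition
  obtain ⟨P, hProw, hPcol, hPsum⟩ := sum_perm_decomp k M' hM'row hM'col
  refine ⟨fun t p => ∑ a : Fin (R p.1), ∑ b : Fin (S p.2), P t ⟨p.1, a⟩ ⟨p.2, b⟩, ?_, ?_, ?_⟩
  · intro t i
    dsimp only
    refine (Finset.sum_comm : ∑ j : Fin n, ∑ a : Fin (R i), ∑ b : Fin (S j), P t ⟨i, a⟩ ⟨j, b⟩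
      = ∑ a : Fin (R i), ∑ j : Fin n, ∑ b : Fin (S j), P t ⟨i, a⟩ ⟨j, b⟩).trans ?_
    have key : ∀ a : Fin (R i), ∑ j : Fin n, ∑ b : Fin (S j), P t ⟨i, a⟩ ⟨j, b⟩ = 1 := by
      intro a
      have h1 := hProw t ⟨i, a⟩
      rw [← Finset.univ_sigma_univ, Finset.sum_sigma] at h1
      exact h1
    rw [Finset.sum_congr rfl (fun a _ => key a)]
    simp
  · intro t j
    dsimp only
    have swap1 : ∀ i : Fin m, ∑ a : Fin (R i), ∑ b : Fin (S j), P t ⟨i, a⟩ ⟨j, b⟩ =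
        ∑ b : Fin (S j), ∑ a : Fin (R i), P t ⟨i, a⟩ ⟨j, b⟩ := fun i => Finset.sum_comm
    rw [Finset.sum_congr rfl (fun i _ => swap1 i), Finset.sum_comm]
    have key : ∀ b : Fin (S j), ∑ i : Fin m, ∑ a : Fin (R i), P t ⟨i, a⟩ ⟨j, b⟩ = 1 := by
      intro b
      have h1 := hPcol t ⟨j, b⟩
      rw [← Finset.univ_sigma_univ, Finset.sum_sigma] at h1
      exact h1
    rw [Finset.sum_congr rfl (fun b _ => key b)]
    simp
  · rintro ⟨i, j⟩
    dsimp only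
    rw [← hM'entry i j]
    rw [Finset.sum_congr rfl (fun a _ => Finset.sum_congr rfl (fun b _ => hPsum ⟨i, a⟩ ⟨j, b⟩))]
    rw [Finset.sum_congr rfl (fun (a : Fin (R i)) _ =>
      (Finset.sum_comm : ∑ b : Fin (S j), ∑ t : Fin k, P t ⟨i, a⟩ ⟨j, b⟩
        = ∑ t : Fin k, ∑ b : Fin (S j), P t ⟨i, a⟩ ⟨j, b⟩))]
    exact Finset.sum_comm
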